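/- Let Φ be a crystallographic root system and R ⊆ Φ. The following are equivalent: (i) for all α, β ∈ R with α + β ∈ Φ one has α + β ∈ R; (iii) for all α₁, …, α_p ∈ R with α₁ + ⋯ + α_p ∈ Φ one has α₁ + ⋯ + α_p ∈ R. -/

import Mathlib

open Pointwise

structure RootSys (V : Type*) [NormedAddCommGroup V] [InnerProductSpace ℝ V] where
  Φ : Set V
  finite : Φ.Finite
  nonzero : ∀ α ∈ Φ, α ≠ (0 : V)
  line : ∀ α ∈ Φ, Φ ∩ {x : V | ∃ t : ℝ, x = t • α} = {α, -α}
  reflect : ∀ α ∈ Φ, ∀ β ∈ Φ, β - (2 * (inner ℝ α β : ℝ) / (inner ℝ α α : ℝ)) • α ∈ Φ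

variable {V : Type*} [NormedAddCommGroup V] [InnerProductSpace ℝ V]

/-- `Φ` is crystallographic: `⟨α^∨, β⟩ ∈ ℤ` for all roots `α, β`. -/
def RootSys.IsCrystallographic (R : RootSys V) : Prop :=
  ∀ α ∈ R.Φ, ∀ β ∈ R.Φ, ∃ n : ℤ, 2 * (inner ℝ α β : ℝ) / (inner ℝ α α : ℝ) = (n : ℝ)

/-- A subset `S ⊆ Φ` is closed if it is stable under sums of two elements staying in `Φ`. -/
def RootSys.IsClosedSubset (R : RootSys V) (S : Set V) : Prop :=
  ∀ α ∈ S, ∀ β ∈ S, α + β ∈ R.Φ → α + β ∈ S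

/-- A set of roots is antisymmetric if it never contains both `α` and `-α`. -/
def IsAntisymSet (S : Set V) : Prop := ∀ α ∈ S, -α ∉ S

/-- A `Φ`-poset: an antisymmetric closed subset of `Φ`. -/
def RootSys.IsPoset (R : RootSys V) (S : Set V) : Prop :=
  S ⊆ R.Φ ∧ IsAntisymSet S ∧ R.IsClosedSubset S

/-- Closure: roots that are nonnegative integer combinations (multiset sums) of elements of `T`. -/
def RootSys.clos (R : RootSys V) (T : Set V) : Set V :=
  {γ ∈ R.Φ | ∃ M : Multiset V, (∀ x ∈ M, x ∈ T) ∧ M.sum = γ}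

/-- Nonnegative integer combinations (multiset sums) of elements of `T`. -/
def nncomb (T : Set V) : Set V :=
  {v | ∃ M : Multiset V, (∀ x ∈ M, x ∈ T) ∧ M.sum = v}

/-- A root system equipped with a generic linear functional determining positive roots. -/
structure PosRootSys (V : Type*) [NormedAddCommGroup V] [InnerProductSpace ℝ V]
    extends RootSys V where
  f : V →ₗ[ℝ] ℝ
  generic : ∀ α ∈ Φ, f α ≠ 0

def PosRootSys.Pos (P : PosRootSys V) : Set V := {α ∈ P.Φ | 0 < P.f α}

def PosRootSys.Neg (P : PosRootSys V) : Set V := {α ∈ P.Φ | P.f α < 0}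

/-- The weak order: `R ≼ S` iff `R⁺ ⊇ S⁺` and `R⁻ ⊆ S⁻`. -/
def PosRootSys.wle (P : PosRootSys V) (R S : Set V) : Prop :=
  S ∩ P.Pos ⊆ R ∩ P.Pos ∧ R ∩ P.Neg ⊆ S ∩ P.Neg

/-- `R` is semiclosed if both `R⁺` and `R⁻` are closed. -/
def PosRootSys.SemiClosed (P : PosRootSys V) (S : Set V) : Prop :=
  S ⊆ P.Φ ∧ P.toRootSys.IsClosedSubset (S ∩ P.Pos) ∧
    P.toRootSys.IsClosedSubset (S ∩ P.Neg)

/-- Negative closure deletion. -/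
def PosRootSys.ncd (P : PosRootSys V) (S : Set V) : Set V :=
  S \ {α | α ∈ S ∩ P.Neg ∧ ∃ X : Finset V, ↑X ⊆ S ∩ P.Pos ∧ α + X.sum id ∈ P.Φ \ S}

/-- Positive closure deletion. -/
def PosRootSys.pcd (P : PosRootSys V) (S : Set V) : Set V :=
  S \ {α | α ∈ S ∩ P.Pos ∧ ∃ X : Finset V, ↑X ⊆ S ∩ P.Neg ∧ α + X.sum id ∈ P.Φ \ S}

/-- Meet formula on closed subsets. -/
def PosRootSys.wmeet (P : PosRootSys V) (R S : Set V) : Set V :=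
  P.ncd (P.toRootSys.clos ((R ∪ S) ∩ P.Pos) ∪ ((R ∩ S) ∩ P.Neg))

/-- Join formula on closed subsets. -/
def PosRootSys.wjoin (P : PosRootSys V) (R S : Set V) : Set V :=
  P.pcd (((R ∩ S) ∩ P.Pos) ∪ P.toRootSys.clos ((R ∪ S) ∩ P.Neg))

lemma RootSys.neg_mem' (R : RootSys V) {α : V} (hα : α ∈ R.Φ) : -α ∈ R.Φ := by
  have h := R.line α hα
  have hmem : -α ∈ R.Φ ∩ {x : V | ∃ t : ℝ, x = t • α} := by
    rw [h]; right; rfl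
  exact hmem.1

lemma multiset_sum_nonpos' (M : Multiset ℝ) (h : ∀ x ∈ M, x ≤ 0) : M.sum ≤ 0 := by
  induction M using Multiset.induction with
  | empty => simp
  | cons a s ih =>
    rw [Multiset.sum_cons]
    exact add_nonpos (h a (Multiset.mem_cons_self a s))
      (ih fun x hx => h x (Multiset.mem_cons_of_mem hx))

lemma real_inner_self_pos' {x : V} (hx : x ≠ 0) : (0:ℝ) < inner ℝ x x :=
  lt_of_le_of_ne real_inner_self_nonneg (Ne.symm (inner_self_ne_zero.mpr hx))

lemma inner_multiset_sum' (y : V) (M : Multiset V) :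
    (inner ℝ y M.sum : ℝ) = (M.map (fun x => (inner ℝ y x : ℝ))).sum := by
  induction M using Multiset.induction with
  | empty => simp
  | cons a s ih => simp [inner_add_right, ih]

lemma key_sub_mem (R : RootSys V) (hcr : R.IsCrystallographic) {α β : V}
    (hα : α ∈ R.Φ) (hβ : β ∈ R.Φ) (hpos : 0 < (inner ℝ α β : ℝ)) :
    α = β ∨ α - β ∈ R.Φ := by
  obtain ⟨n, hn⟩ := hcr α hα β hβ
  obtain ⟨m, hm⟩ := hcr β hβ α hα
  have ha : (0:ℝ) < inner ℝ α α := real_inner_self_pos' (R.nonzero α hα)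
  have hb : (0:ℝ) < inner ℝ β β := real_inner_self_pos' (R.nonzero β hβ)
  have hsymm : (inner ℝ β α : ℝ) = inner ℝ α β := (real_inner_comm α β)
  have hnpos : (0:ℝ) < n := by rw [← hn]; positivity
  have hmpos : (0:ℝ) < m := by
    rw [← hm, hsymm]; positivity
  have hn1 : (1:ℤ) ≤ n := by exact_mod_cast hnpos
  have hm1 : (1:ℤ) ≤ m := by exact_mod_cast hmpos
  -- If m = 1 : α - β ∈ Φ directly.
  by_cases hm1' : m = 1
  · right
    have := R.reflect β hβ α hα
    rw [hm, hm1'] at this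
    simpa using this
  by_cases hn1' : n = 1
  · right
    have := R.reflect α hα β hβ
    rw [hn, hn1'] at this
    simpa using R.neg_mem' this
  -- n, m ≥ 2: Cauchy-Schwarz forces equality, so α ∥ β.
  left
  have hn2 : (2:ℤ) ≤ n := by omega
  have hm2 : (2:ℤ) ≤ m := by omega
  have hcs : (inner ℝ α β : ℝ) * inner ℝ α β ≤ (inner ℝ α α : ℝ) * inner ℝ β β :=
    real_inner_mul_inner_self_le α β
  have hprod : ((n : ℝ) * m) = 4 * ((inner ℝ α β : ℝ) * inner ℝ α β) /
      ((inner ℝ α α : ℝ) * inner ℝ β β) := by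
    rw [← hn, ← hm, hsymm]; field_simp; ring
  have h4n : (4:ℝ) ≤ (n:ℝ) * m := by
    have : (4:ℤ) ≤ n * m := by nlinarith
    exact_mod_cast this
  have hle4 : ((n:ℝ) * m) ≤ 4 := by
    rw [hprod]
    rw [div_le_iff₀ (by positivity)]
    nlinarith
  have heq : (inner ℝ α β : ℝ) * inner ℝ α β = (inner ℝ α α : ℝ) * inner ℝ β β := by
    have h4 : ((n:ℝ) * m) = 4 := le_antisymm hle4 h4n
    rw [hprod] at h4
    field_simp at h4
    nlinarith
  -- equality in Cauchy-Schwarz ⇒ α = t • β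
  have hnorm : (inner ℝ α β : ℝ) = ‖β‖ * ‖α‖ := by
    have hA : (inner ℝ α α : ℝ) = ‖α‖ * ‖α‖ := real_inner_self_eq_norm_mul_norm α
    have hB : (inner ℝ β β : ℝ) = ‖β‖ * ‖β‖ := real_inner_self_eq_norm_mul_norm β
    rw [hA, hB] at heq
    nlinarith [hpos, mul_nonneg (norm_nonneg β) (norm_nonneg α),
      sq_nonneg ((inner ℝ α β : ℝ) - ‖β‖ * ‖α‖), sq_nonneg ((inner ℝ α β : ℝ) + ‖β‖ * ‖α‖)]
  have hone : |(inner ℝ β α : ℝ) / (‖β‖ * ‖α‖)| = 1 := by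
    have hβ0 : ‖β‖ ≠ 0 := norm_ne_zero_iff.mpr (R.nonzero β hβ)
    have hα0 : ‖α‖ ≠ 0 := norm_ne_zero_iff.mpr (R.nonzero α hα)
    rw [hsymm, hnorm, div_self (by positivity : ‖β‖ * ‖α‖ ≠ 0)]
    norm_num
  obtain ⟨-, r, hr0, hr⟩ := (abs_real_inner_div_norm_mul_norm_eq_one_iff β α).mp hone
  have hline : α ∈ R.Φ ∩ {x : V | ∃ t : ℝ, x = t • β} := ⟨hα, ⟨r, hr⟩⟩
  rw [R.line β hβ] at hline
  rcases hline with h | h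
  · exact h
  · exfalso
    rw [show α = -β from h] at hpos
    rw [inner_neg_left] at hpos
    linarith

theorem stmt4 (R : RootSys V) (hcr : R.IsCrystallographic)
    (S : Set V) (hS : S ⊆ R.Φ) :
    R.IsClosedSubset S ↔
      ∀ M : Multiset V, M ≠ 0 → (∀ x ∈ M, x ∈ S) → M.sum ∈ R.Φ → M.sum ∈ S := by
  constructor
  · intro hcl M
    induction M using Multiset.strongInductionOn with
    | ih M IH =>
      intro hne hmem hsum
      classical
      set s := M.sum with hs
      -- find x ∈ M with ⟨s, x⟩ > 0
      have hspos : (0:ℝ) < inner ℝ s s := real_inner_self_pos' (R.nonzero s hsum)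
      have hex : ∃ x ∈ M, 0 < (inner ℝ s x : ℝ) := by
        by_contra hcon
        push_neg at hcon
        have h1 : (inner ℝ s s : ℝ) = (M.map (fun x => (inner ℝ s x : ℝ))).sum :=
          inner_multiset_sum' s M
        have h2 : (M.map (fun x => (inner ℝ s x : ℝ))).sum ≤ 0 := by
          apply multiset_sum_nonpos'
          intro a ha
          obtain ⟨x, hx, rfl⟩ := Multiset.mem_map.mp ha
          exact hcon x hx
        linarith [h1 ▸ hspos]
      obtain ⟨x, hxM, hxpos⟩ := hex
      have hxS : x ∈ S := hmem x hxM
      have hxΦ : x ∈ R.Φ := hS hxS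
      rcases key_sub_mem R hcr hsum hxΦ hxpos with heq | hsub
      · rw [heq]; exact hxS
      · have hM' : x ::ₘ M.erase x = M := Multiset.cons_erase hxM
        have hadd : x + (M.erase x).sum = s := by
          conv_rhs => rw [hs, ← hM']
          rw [Multiset.sum_cons]
        have hsum' : (M.erase x).sum = s - x := by
          rw [← hadd]; abel
        have hne' : M.erase x ≠ 0 := by
          intro h0
          rw [h0, Multiset.sum_zero] at hsum'
          have hsx : s - x = 0 := by simpa [h0] using hsum'.symm
          exact R.nonzero _ hsub hsx
        have hlt : M.erase x < M := Multiset.erase_lt.mpr hxM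
        have hmem' : ∀ y ∈ M.erase x, y ∈ S := fun y hy =>
          hmem y (Multiset.mem_of_mem_erase hy)
        have hSsub : s - x ∈ S := by
          have := IH (M.erase x) hlt hne' hmem' (by rw [hsum']; exact hsub)
          rwa [hsum'] at this
        have := hcl (s - x) hSsub x hxS (by rwa [sub_add_cancel])
        rwa [sub_add_cancel] at this
  · intro h α hα β hβ hsum
    have := h {α, β} (by simp)
      (by intro x hx
          simp only [Multiset.insert_eq_cons, Multiset.mem_cons, Multiset.mem_singleton] at hx
          rcases hx with rfl | rfl
          · exact hα
          · exact hβ) (by simpa using hsum)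
    simpa using this
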